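/- For every positive invertible element a of 𝒜, the function λ ↦ (1+λ)⁻¹·1 − (a + λ·1)⁻¹ is Bochner integrable on [0,∞) and ∫₀^∞ ((1+λ)⁻¹·1 − (a + λ·1)⁻¹) dλ = log a. (This is the integral representation Log a = ∫₀^∞ (1/(λ+1) − 1/(λ+a)) dλ applied in the proof of Lemma 2.2.) -/

import Mathlib

open MeasureTheory Set Filter Topology

namespace Stmt15Aux

lemma base_integrable : IntegrableOn (fun lam : ℝ => ((1 + lam) ^ 2)⁻¹) (Ioi 0) volume := by
  have hd : ∀ lam ∈ Ici (0 : ℝ),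
      HasDerivAt (fun x : ℝ => -(1 + x)⁻¹) (((1 + lam) ^ 2)⁻¹) lam := by
    intro lam hlam
    have h1 : (1 : ℝ) + lam ≠ 0 := by
      have : (0:ℝ) ≤ lam := hlam
      positivity
    have : HasDerivAt (fun x : ℝ => -(1 + x)⁻¹) _ lam := (((hasDerivAt_id lam).const_add 1).inv h1).neg
    convert this using 1
    simp [neg_div]
  have ht : Tendsto (fun x : ℝ => -(1 + x)⁻¹) atTop (𝓝 0) := by
    have h1 : Tendsto (fun x : ℝ => 1 + x) atTop atTop :=
      tendsto_atTop_add_const_left _ 1 tendsto_id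
    have h2 : Tendsto (fun x : ℝ => (1 + x)⁻¹) atTop (𝓝 0) := tendsto_inv_atTop_zero.comp h1
    simpa using h2.neg
  refine integrableOn_Ioi_deriv_of_nonneg' hd (fun x hx => ?_) ht
  have : (0:ℝ) < x := hx
  positivity

lemma abs_bound {ε M x lam : ℝ} (hε : 0 < ε) (hεx : ε ≤ x) (hxM : x ≤ M) (hlam : 0 ≤ lam) :
    |(1 + lam)⁻¹ - (x + lam)⁻¹| ≤ ((M + 1) / min ε 1) * ((1 + lam) ^ 2)⁻¹ := by
  have hm : 0 < min ε 1 := lt_min hε one_pos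
  have h1 : (0 : ℝ) < 1 + lam := by linarith
  have hx0 : 0 < x := hε.trans_le hεx
  have h2 : (0 : ℝ) < x + lam := by linarith
  have key : (1 + lam)⁻¹ - (x + lam)⁻¹ = (x - 1) / ((1 + lam) * (x + lam)) := by
    field_simp
    ring
  rw [key, abs_div, abs_of_pos (show (0:ℝ) < (1 + lam) * (x + lam) by positivity),
    div_le_iff₀ (by positivity)]
  have hxineq : min ε 1 * (1 + lam) ≤ x + lam := by
    have h1' : min ε 1 ≤ x := le_trans (min_le_left _ _) hεx
    have h2' : min ε 1 ≤ 1 := min_le_right _ _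
    nlinarith
  have habs : |x - 1| ≤ M + 1 := by
    rw [abs_le]
    constructor <;> nlinarith
  calc |x - 1| ≤ M + 1 := habs
    _ = ((M + 1) / min ε 1) * ((1 + lam) ^ 2)⁻¹ * (min ε 1 * (1 + lam) ^ 2) := by
        field_simp
    _ ≤ ((M + 1) / min ε 1) * ((1 + lam) ^ 2)⁻¹ * ((1 + lam) * (x + lam)) := by
        have hM1 : 0 ≤ M + 1 := by nlinarith
        have : min ε 1 * (1 + lam) ^ 2 ≤ (1 + lam) * (x + lam) := by nlinarith
        have h0 : 0 ≤ ((M + 1) / min ε 1) * ((1 + lam) ^ 2)⁻¹ := by positivity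
        exact mul_le_mul_of_nonneg_left this h0

lemma scalar_integrable {x : ℝ} (hx : 0 < x) :
    IntegrableOn (fun lam : ℝ => (1 + lam)⁻¹ - (x + lam)⁻¹) (Ioi 0) volume := by
  refine (MeasureTheory.Integrable.const_mul base_integrable ((x + 1) / min x 1)).mono' ?_ ?_
  · refine (ContinuousOn.aestronglyMeasurable ?_ measurableSet_Ioi)
    refine ContinuousOn.sub ?_ ?_
    · exact ContinuousOn.inv₀ (by fun_prop) fun lam hlam =>
        ne_of_gt (by have : (0:ℝ) < lam := hlam; linarith)
    · exact ContinuousOn.inv₀ (by fun_prop) fun lam hlam =>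
        ne_of_gt (by have : (0:ℝ) < lam := hlam; linarith)
  · filter_upwards [ae_restrict_mem measurableSet_Ioi] with lam hlam
    have := abs_bound hx le_rfl le_rfl (le_of_lt (hlam : (0:ℝ) < lam))
    simpa [Real.norm_eq_abs] using this

lemma scalar_integral {x : ℝ} (hx : 0 < x) :
    ∫ lam in Ioi (0 : ℝ), ((1 + lam)⁻¹ - (x + lam)⁻¹) = Real.log x := by
  have hderiv : ∀ lam ∈ Ici (0 : ℝ),
      HasDerivAt (fun t : ℝ => Real.log (1 + t) - Real.log (x + t))
        ((1 + lam)⁻¹ - (x + lam)⁻¹) lam := by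
    intro lam hlam
    have hlam0 : (0:ℝ) ≤ lam := hlam
    have h1 : (1 : ℝ) + lam ≠ 0 := by positivity
    have h2 : x + lam ≠ 0 := by positivity
    have d1 : HasDerivAt (fun t : ℝ => Real.log (1 + t)) (1 / (1 + lam)) lam := by
      simpa using ((hasDerivAt_id lam).const_add 1).log h1
    have d2 : HasDerivAt (fun t : ℝ => Real.log (x + t)) (1 / (x + lam)) lam := by
      simpa using ((hasDerivAt_id lam).const_add x).log h2
    have := d1.sub d2; simp only [one_div] at this; exact this
  have htend : Tendsto (fun t : ℝ => Real.log (1 + t) - Real.log (x + t)) atTop (𝓝 0) := by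
    have hq : Tendsto (fun t : ℝ => (1 + t) / (x + t)) atTop (𝓝 1) := by
      have h0 : Tendsto (fun t : ℝ => (1 - x) / (x + t)) atTop (𝓝 0) :=
        Tendsto.div_atTop tendsto_const_nhds (tendsto_atTop_add_const_left _ x tendsto_id)
      have : Tendsto (fun t : ℝ => 1 + (1 - x) / (x + t)) atTop (𝓝 (1 + 0)) :=
        tendsto_const_nhds.add h0
      rw [add_zero] at this
      refine this.congr' ?_
      filter_upwards [eventually_gt_atTop 0] with t ht
      have h2 : x + t ≠ 0 := by positivity
      field_simp
      ring
    have hlog : Tendsto (fun t : ℝ => Real.log ((1 + t) / (x + t))) atTop (𝓝 0) := by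
      have := (Real.continuousAt_log (by norm_num : (1:ℝ) ≠ 0)).tendsto.comp hq
      simpa [Function.comp_def] using this
    refine hlog.congr' ?_
    filter_upwards [eventually_gt_atTop 0] with t ht
    have h1 : (1 : ℝ) + t ≠ 0 := by positivity
    have h2 : x + t ≠ 0 := by positivity
    rw [Real.log_div h1 h2]
  rw [integral_Ioi_of_hasDerivAt_of_tendsto' hderiv (scalar_integrable hx) htend]
  simp [Real.log_one]

end Stmt15Aux

open Stmt15Aux

/-- in a unital C*-algebra, for `a` positive and invertible,
`λ ↦ (1+λ)⁻¹·1 - (a + λ·1)⁻¹` is Bochner integrable on `[0,∞)` and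
`∫₀^∞ ((1+λ)⁻¹·1 - (a + λ·1)⁻¹) dλ = log a` (continuous functional calculus). -/
theorem stmt15 {𝒜 : Type*} [CStarAlgebra 𝒜] [PartialOrder 𝒜] [StarOrderedRing 𝒜]
    (a : 𝒜) (ha : 0 ≤ a) (ha' : IsUnit a) :
    IntegrableOn
      (fun lam : ℝ => (1 + lam)⁻¹ • (1 : 𝒜) - Ring.inverse (a + lam • 1))
      (Set.Ici (0 : ℝ)) volume ∧
    ∫ lam in Set.Ici (0 : ℝ),
        ((1 + lam)⁻¹ • (1 : 𝒜) - Ring.inverse (a + lam • 1)) =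
      cfc Real.log a := by
  have hsa : IsSelfAdjoint a := IsSelfAdjoint.of_nonneg ha
  have hpos : ∀ x ∈ spectrum ℝ a, (0 : ℝ) < x := by
    intro x hx
    refine lt_of_le_of_ne (spectrum_nonneg_of_nonneg ha hx) ?_
    intro h
    exact (spectrum.zero_notMem_iff ℝ |>.mpr ha') (h ▸ hx)
  -- a uniform lower bound on the spectrum
  obtain ⟨ε, hε, hεle⟩ : ∃ ε > (0:ℝ), ∀ x ∈ spectrum ℝ a, ε ≤ x := by
    rcases (spectrum ℝ a).eq_empty_or_nonempty with h | h
    · exact ⟨1, one_pos, by simp [h]⟩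
    · have hcpt : IsCompact (spectrum ℝ a) := spectrum.isCompact a
      exact ⟨sInf (spectrum ℝ a), hpos _ (hcpt.sInf_mem h),
        fun x hx => csInf_le hcpt.bddBelow hx⟩
  obtain ⟨M, hM0, hM⟩ : ∃ M : ℝ, 0 ≤ M ∧ ∀ x ∈ spectrum ℝ a, x ≤ M := by
    have hcpt : IsCompact (spectrum ℝ a) := spectrum.isCompact a
    rcases hcpt.bddAbove with ⟨M, hMb⟩
    exact ⟨max M 0, le_max_right _ _, fun x hx => le_trans (hMb hx) (le_max_left _ _)⟩
  -- the two-variable continuous function and its curried version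
  have hne2 : ∀ p : ℝ × spectrum ℝ a, ((p.2 : ℝ) + max p.1 0) ≠ 0 := by
    intro p
    have h1 := hpos _ p.2.2
    have h2 := le_max_right p.1 0
    exact ne_of_gt (by linarith)
  have hne1 : ∀ p : ℝ × spectrum ℝ a, ((1 : ℝ) + max p.1 0) ≠ 0 := by
    intro p
    have h2 := le_max_right p.1 0
    exact ne_of_gt (by linarith)
  set G : C(ℝ × spectrum ℝ a, ℝ) :=
    ⟨fun p => (1 + max p.1 0)⁻¹ - ((p.2 : ℝ) + max p.1 0)⁻¹, by
      refine Continuous.sub ?_ ?_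
      · exact (continuous_const.add ((continuous_fst).max continuous_const)).inv₀ hne1
      · exact ((continuous_subtype_val.comp continuous_snd).add
          ((continuous_fst).max continuous_const)).inv₀ hne2⟩ with hGdef
  set F : ℝ → C(spectrum ℝ a, ℝ) := fun lam => ContinuousMap.curry G lam with hFdef
  have hFcont : Continuous F := (ContinuousMap.curry G).continuous
  -- norm bound
  have hFbound : ∀ lam : ℝ, 0 ≤ lam →
      ‖F lam‖ ≤ ((M + 1) / min ε 1) * ((1 + lam) ^ 2)⁻¹ := by
    intro lam hlam
    have hm : 0 < min ε 1 := lt_min hε one_pos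
    have hεM : 0 ≤ M + 1 := by linarith
    rw [ContinuousMap.norm_le _ (by positivity)]
    intro x
    have hb := abs_bound hε (hεle _ x.2) (hM _ x.2) hlam
    simpa [hFdef, hGdef, Real.norm_eq_abs, max_eq_left hlam] using hb
  -- integrability of F on (0, ∞)
  have hFint : IntegrableOn F (Ioi (0:ℝ)) volume := by
    refine (MeasureTheory.Integrable.const_mul base_integrable ((M + 1) / min ε 1)).mono'
      (hFcont.aestronglyMeasurable.restrict) ?_
    filter_upwards [ae_restrict_mem measurableSet_Ioi] with lam hlam
    exact hFbound lam (le_of_lt hlam)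
  -- the continuous functional calculus as a continuous linear map
  let L : C(spectrum ℝ a, ℝ) →L[ℝ] 𝒜 :=
    { toLinearMap := ((cfcHom hsa (R := ℝ)).toAlgHom.toLinearMap)
      cont := (cfcHom_isClosedEmbedding hsa).continuous }
  have hLapp : ∀ f : C(spectrum ℝ a, ℝ), L f = cfcHom hsa (R := ℝ) f := fun _ => rfl
  -- identification of the integrand with cfc
  have key : ∀ lam : ℝ, 0 ≤ lam →
      (1 + lam)⁻¹ • (1 : 𝒜) - Ring.inverse (a + lam • 1) = L (F lam) := by
    intro lam hlam
    have hc1 : ContinuousOn (fun x : ℝ => (x + lam)⁻¹) (spectrum ℝ a) :=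
      ContinuousOn.inv₀ (by fun_prop) fun x hx => ne_of_gt (by have := hpos x hx; linarith)
    have hne : ∀ x ∈ spectrum ℝ a, x + lam ≠ 0 :=
      fun x hx => ne_of_gt (by have := hpos x hx; linarith)
    have hcf : ContinuousOn (fun x : ℝ => (1 + lam)⁻¹ - (x + lam)⁻¹) (spectrum ℝ a) :=
      continuousOn_const.sub hc1
    have e1 : cfc (fun x : ℝ => (1 + lam)⁻¹ - (x + lam)⁻¹) a
        = cfc (fun _ : ℝ => (1 + lam)⁻¹) a - cfc (fun x : ℝ => (x + lam)⁻¹) a :=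
      cfc_sub _ _ a (by fun_prop) hc1
    have e2 : cfc (fun _ : ℝ => (1 + lam)⁻¹) a = (1 + lam)⁻¹ • (1 : 𝒜) := by
      rw [cfc_const _ a hsa, Algebra.algebraMap_eq_smul_one]
    have e4 : cfc (fun x : ℝ => x + lam) a = a + lam • (1 : 𝒜) := by
      have := cfc_add_const lam (fun x : ℝ => x) a (by fun_prop) hsa
      rw [cfc_id' ℝ a hsa] at this
      rw [this, Algebra.algebraMap_eq_smul_one]
    have e3 : cfc (fun x : ℝ => (x + lam)⁻¹) a = Ring.inverse (a + lam • (1 : 𝒜)) := by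
      rw [← e4]
      exact cfc_inv (fun x : ℝ => x + lam) a hne (by fun_prop) hsa
    have e5 : cfc (fun x : ℝ => (1 + lam)⁻¹ - (x + lam)⁻¹) a = L (F lam) := by
      rw [cfc_apply _ a hsa hcf, hLapp]
      congr 1
      ext x
      simp [hFdef, hGdef, max_eq_left hlam]
    rw [← e5, e1, e2, e3]
  -- compute the C(σ,ℝ)-valued integral
  have hlogc : ContinuousOn Real.log (spectrum ℝ a) := by
    refine Real.continuousOn_log.mono ?_
    intro x hx
    simp only [Set.mem_compl_iff, Set.mem_singleton_iff]
    exact ne_of_gt (hpos x hx)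
  have hIeq : (∫ lam in Ioi (0:ℝ), F lam) =
      (⟨(spectrum ℝ a).restrict Real.log, hlogc.restrict⟩ : C(spectrum ℝ a, ℝ)) := by
    ext x
    have heval := (ContinuousMap.evalCLM ℝ x).integral_comp_comm hFint
    have hx := hpos _ x.2
    have hcongr : ∫ lam in Ioi (0:ℝ), (ContinuousMap.evalCLM ℝ x) (F lam)
        = ∫ lam in Ioi (0:ℝ), ((1 + lam)⁻¹ - ((x : ℝ) + lam)⁻¹) := by
      refine setIntegral_congr_fun measurableSet_Ioi ?_
      intro lam hlam
      have hlam' : (0:ℝ) ≤ lam := le_of_lt hlam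
      simp [ContinuousMap.evalCLM, hFdef, hGdef, max_eq_left hlam',
        BoundedContinuousFunction.evalCLM]
    calc (∫ lam in Ioi (0:ℝ), F lam) x
        = (ContinuousMap.evalCLM ℝ x) (∫ lam in Ioi (0:ℝ), F lam) := rfl
      _ = ∫ lam in Ioi (0:ℝ), (ContinuousMap.evalCLM ℝ x) (F lam) := heval.symm
      _ = ∫ lam in Ioi (0:ℝ), ((1 + lam)⁻¹ - ((x : ℝ) + lam)⁻¹) := hcongr
      _ = Real.log x := scalar_integral hx
  have hEqOn : EqOn (fun lam : ℝ => (1 + lam)⁻¹ • (1 : 𝒜) - Ring.inverse (a + lam • 1))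
      (fun lam => L (F lam)) (Ici 0) := fun lam hlam => key lam hlam
  have hLFint : IntegrableOn (fun lam => L (F lam)) (Ici (0:ℝ)) volume := by
    rw [integrableOn_Ici_iff_integrableOn_Ioi]
    exact L.integrable_comp hFint
  constructor
  · exact hLFint.congr_fun (fun lam hlam => (hEqOn hlam).symm) measurableSet_Ici
  · rw [setIntegral_congr_fun measurableSet_Ici hEqOn, integral_Ici_eq_integral_Ioi,
      L.integral_comp_comm hFint, hIeq, cfc_apply Real.log a hsa hlogc]
    rfl
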